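/- Let n ≥ 2 and c ≥ 0 be integers and let (A_0, A_1, …, A_n) be the A-partition of the directed graph cDB⁺(n+c, n, n). For every i with 2 ≤ i ≤ n there exists a subset S_i ⊆ A_i of cardinality (n+c−1)!/(c+1)! such that every vertex of A_{i−1} is an out-neighbor of some vertex of S_i (i.e., S_i dominates all vertices in A_{i−1}). -/

import Mathlib

/-- A sequence `x` of length `n` over the alphabet `Fin d` is `t`-constrained if
equal symbols occur at positions at distance at least `t`. -/
def dbConstrained (d t n : ℕ) (x : Fin n → Fin d) : Prop :=
  ∀ i j : Fin n, i < j → x i = x j → t ≤ (j : ℕ) - (i : ℕ)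

/-- The vertex set `V(d,t,n)` of the `t`-constrained de Bruijn graph: all
`t`-constrained sequences of length `n` over a `d`-letter alphabet. -/
abbrev dbVtx (d t n : ℕ) : Type := {x : Fin n → Fin d // dbConstrained d t n x}

/-- `dbShift x y` holds when there is a directed de Bruijn edge from `x` to `y`,
i.e. `y` is obtained from `x` by deleting its first symbol and appending a new
last symbol. -/
def dbShift {d t n : ℕ} (x y : dbVtx d t n) : Prop :=
  ∀ (i : Fin n) (h : (i : ℕ) + 1 < n), y.val i = x.val ⟨(i : ℕ) + 1, h⟩

/-- `S` is a dominating set of the directed `t`-constrained de Bruijn graph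
`cDB⁺(d,t,n)`: every vertex is dominated by (equal to, or an out-neighbor of)
some element of `S`. -/
def dbDirDominating {d t n : ℕ} (S : Set (dbVtx d t n)) : Prop :=
  ∀ v : dbVtx d t n, ∃ s ∈ S, s = v ∨ dbShift s v

/-- The domination number `γ(cDB⁺(d,t,n))` of the directed `t`-constrained
de Bruijn graph. -/
noncomputable def gammaDir (d t n : ℕ) : ℕ :=
  sInf {k | ∃ S : Set (dbVtx d t n), S.Finite ∧ S.ncard = k ∧ dbDirDominating S}

/-- Adjacency in the undirected `t`-constrained de Bruijn graph `cDB(d,t,n)`: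
edge directions are ignored and loops are removed. -/
def dbAdj {d t n : ℕ} (x y : dbVtx d t n) : Prop :=
  x ≠ y ∧ (dbShift x y ∨ dbShift y x)

/-- `S` is a dominating set of the undirected graph `cDB(d,t,n)`: every vertex
is dominated by (equal to, or adjacent to) some element of `S`. -/
def dbUndirDominating {d t n : ℕ} (S : Set (dbVtx d t n)) : Prop :=
  ∀ v : dbVtx d t n, ∃ s ∈ S, s = v ∨ dbAdj s v

/-- The domination number `γ(cDB(d,t,n))` of the undirected `t`-constrained
de Bruijn graph. -/
noncomputable def gammaUndir (d t n : ℕ) : ℕ :=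
  sInf {k | ∃ S : Set (dbVtx d t n), S.Finite ∧ S.ncard = k ∧ dbUndirDominating S}


section Aux
variable (n c i : ℕ)

def auxTail (e : Fin (n-2) → Fin (n+c-1)) (j : ℕ) : ℕ :=
  if j = i - 1 then n + c - 1
  else if j < i - 1 then (if h : j - 1 < n - 2 then ((e ⟨j-1,h⟩ : Fin (n+c-1)) : ℕ) else 0)
  else (if h : j - 2 < n - 2 then ((e ⟨j-2,h⟩ : Fin (n+c-1)) : ℕ) else 0)

lemma auxTail_lt (hn : 2 ≤ n) (e : Fin (n-2) → Fin (n+c-1)) (j : ℕ) :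
    auxTail n c i e j < n + c := by
  unfold auxTail
  split_ifs with h1 h2 h3 h4
  · omega
  · exact Nat.lt_of_lt_of_le (e ⟨_, h3⟩).isLt (by omega)
  · omega
  · exact Nat.lt_of_lt_of_le (e ⟨_, h4⟩).isLt (by omega)
  · omega

lemma auxTail_eval_eq (e : Fin (n-2) → Fin (n+c-1)) {j : ℕ} (hj : j = i - 1) :
    auxTail n c i e j = n + c - 1 := by
  unfold auxTail; rw [if_pos hj]

lemma auxTail_eval_lt (e : Fin (n-2) → Fin (n+c-1)) {j : ℕ} (hj : j < i - 1)
    (h : j - 1 < n - 2) : auxTail n c i e j = (e ⟨j-1,h⟩ : ℕ) := by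
  unfold auxTail; rw [if_neg (by omega), if_pos hj, dif_pos h]

lemma auxTail_eval_gt (e : Fin (n-2) → Fin (n+c-1)) {j : ℕ} (hj : i - 1 < j)
    (h : j - 2 < n - 2) : auxTail n c i e j = (e ⟨j-2,h⟩ : ℕ) := by
  unfold auxTail; rw [if_neg (by omega), if_neg (by omega), dif_pos h]

lemma auxHead_ex (hn : 2 ≤ n) (e : Fin (n-2) → Fin (n+c-1)) :
    ∃ a, a < n + c ∧ ∀ j, 1 ≤ j → j < n → auxTail n c i e j ≠ a := by
  by_contra hcon
  push_neg at hcon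
  have hsub : Finset.range (n+c) ⊆ (Finset.Ico 1 n).image (fun j => auxTail n c i e j) := by
    intro a ha
    simp only [Finset.mem_range] at ha
    obtain ⟨j, h1, h2, h3⟩ := hcon a ha
    exact Finset.mem_image.mpr ⟨j, Finset.mem_Ico.mpr ⟨h1, h2⟩, h3⟩
  have h1 := Finset.card_le_card hsub
  have h2 := Finset.card_image_le (s := Finset.Ico 1 n) (f := fun j => auxTail n c i e j)
  simp [Nat.card_Ico] at h1 h2
  omega

noncomputable def auxHead (hn : 2 ≤ n) (e : Fin (n-2) → Fin (n+c-1)) : ℕ :=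
  (auxHead_ex n c i hn e).choose

lemma auxHead_lt (hn : 2 ≤ n) (e : Fin (n-2) → Fin (n+c-1)) : auxHead n c i hn e < n + c :=
  (auxHead_ex n c i hn e).choose_spec.1

lemma auxHead_ne (hn : 2 ≤ n) (e : Fin (n-2) → Fin (n+c-1)) {j : ℕ} (h1 : 1 ≤ j) (h2 : j < n) :
    auxTail n c i e j ≠ auxHead n c i hn e :=
  (auxHead_ex n c i hn e).choose_spec.2 j h1 h2

noncomputable def auxVec (hn : 2 ≤ n) (e : Fin (n-2) → Fin (n+c-1)) (j : Fin n) : Fin (n+c) :=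
  if j.val = 0 then ⟨auxHead n c i hn e, auxHead_lt n c i hn e⟩
  else ⟨auxTail n c i e j.val, auxTail_lt n c i hn e j.val⟩

lemma auxTail_inj (hi2 : 2 ≤ i) (hin : i ≤ n) {e : Fin (n-2) → Fin (n+c-1)}
    (he : Function.Injective e) {a b : ℕ} (ha : 1 ≤ a) (hab : a < b) (hb : b < n) :
    auxTail n c i e a ≠ auxTail n c i e b := by
  rcases lt_trichotomy a (i-1) with hA | hA | hA <;>
    rcases lt_trichotomy b (i-1) with hB | hB | hB
  · rw [auxTail_eval_lt n c i e hA (by omega), auxTail_eval_lt n c i e hB (by omega)]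
    intro h
    have := he (Fin.ext h)
    simp only [Fin.mk.injEq] at this
    omega
  · rw [auxTail_eval_lt n c i e hA (by omega), auxTail_eval_eq n c i e hB]
    have := (e ⟨a-1, by omega⟩).isLt; omega
  · rw [auxTail_eval_lt n c i e hA (by omega), auxTail_eval_gt n c i e hB (by omega)]
    intro h
    have := he (Fin.ext h)
    simp only [Fin.mk.injEq] at this
    omega
  · omega
  · omega
  · rw [auxTail_eval_eq n c i e hA, auxTail_eval_gt n c i e hB (by omega)]
    have := (e ⟨b-2, by omega⟩).isLt; omega
  · omega
  · omega
  · rw [auxTail_eval_gt n c i e hA (by omega), auxTail_eval_gt n c i e hB (by omega)]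
    intro h
    have := he (Fin.ext h)
    simp only [Fin.mk.injEq] at this
    omega

lemma auxVec_constrained (hn : 2 ≤ n) (hi2 : 2 ≤ i) (hin : i ≤ n)
    {e : Fin (n-2) → Fin (n+c-1)} (he : Function.Injective e) :
    dbConstrained (n+c) n n (auxVec n c i hn e) := by
  intro a b hab heq
  exfalso
  unfold auxVec at heq
  rcases Nat.eq_zero_or_pos a.val with h0 | h0
  · have hb0 : b.val ≠ 0 := by omega
    rw [if_pos h0, if_neg hb0] at heq
    exact auxHead_ne n c i hn e (by omega) b.isLt (congrArg Fin.val heq).symm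
  · have ha0 : a.val ≠ 0 := by omega
    rw [if_neg ha0, if_neg (by omega : b.val ≠ 0)] at heq
    exact auxTail_inj n c i hi2 hin he h0 hab b.isLt (congrArg Fin.val heq)

noncomputable def auxVtx (hn : 2 ≤ n) (hi2 : 2 ≤ i) (hin : i ≤ n)
    (e : Fin (n-2) ↪ Fin (n+c-1)) : dbVtx (n+c) n n :=
  ⟨auxVec n c i hn e.1, auxVec_constrained n c i hn hi2 hin e.2⟩

lemma auxVec_val_ne (hn : 2 ≤ n) (e : Fin (n-2) → Fin (n+c-1)) {j : Fin n}
    (h : j.val ≠ 0) : (auxVec n c i hn e j : ℕ) = auxTail n c i e j.val := by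
  unfold auxVec; rw [if_neg h]

lemma auxVtx_inj (hn : 2 ≤ n) (hi2 : 2 ≤ i) (hin : i ≤ n) :
    Function.Injective (auxVtx n c i hn hi2 hin) := by
  intro e e' h
  have hval : auxVec n c i hn e.1 = auxVec n c i hn e'.1 := congrArg Subtype.val h
  ext q
  have hqn : q.val < n - 2 := q.isLt
  by_cases hq : q.val < i - 2
  · have hj : q.val + 1 < n := by omega
    have hh : q.val + 1 - 1 < n - 2 := by omega
    have h1 : auxTail n c i e.1 (q.val+1) = auxTail n c i e'.1 (q.val+1) := by
      have h0 := congrArg Fin.val (congrFun hval ⟨q.val+1, hj⟩)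
      rw [auxVec_val_ne n c i hn e.1 (j := ⟨q.val+1, hj⟩) (by simp),
          auxVec_val_ne n c i hn e'.1 (j := ⟨q.val+1, hj⟩) (by simp)] at h0
      simpa using h0
    rw [auxTail_eval_lt n c i e.1 (by omega) hh,
        auxTail_eval_lt n c i e'.1 (by omega) hh] at h1
    have hq1 : (⟨q.val+1-1, hh⟩ : Fin (n-2)) = q := Fin.ext (by simp)
    refine congrArg Fin.val ?_
    calc e q = e.1 ⟨q.val+1-1, hh⟩ := congrArg e.1 hq1.symm
      _ = e'.1 ⟨q.val+1-1, hh⟩ := Fin.ext h1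
      _ = e' q := congrArg e'.1 hq1
  · have hj : q.val + 2 < n := by omega
    have hh : q.val + 2 - 2 < n - 2 := by omega
    have h1 : auxTail n c i e.1 (q.val+2) = auxTail n c i e'.1 (q.val+2) := by
      have h0 := congrArg Fin.val (congrFun hval ⟨q.val+2, hj⟩)
      rw [auxVec_val_ne n c i hn e.1 (j := ⟨q.val+2, hj⟩) (by simp),
          auxVec_val_ne n c i hn e'.1 (j := ⟨q.val+2, hj⟩) (by simp)] at h0
      simpa using h0
    rw [auxTail_eval_gt n c i e.1 (by omega) hh,
        auxTail_eval_gt n c i e'.1 (by omega) hh] at h1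
    have hq1 : (⟨q.val+2-2, hh⟩ : Fin (n-2)) = q := Fin.ext (by simp)
    refine congrArg Fin.val ?_
    calc e q = e.1 ⟨q.val+2-2, hh⟩ := congrArg e.1 hq1.symm
      _ = e'.1 ⟨q.val+2-2, hh⟩ := Fin.ext h1
      _ = e' q := congrArg e'.1 hq1

end Aux

lemma vtx_inj {d n : ℕ} (v : dbVtx d n n) {a b : Fin n} (hab : a ≠ b) :
    v.val a ≠ v.val b := by
  intro heq
  rcases lt_or_gt_of_ne hab with h | h
  · have := v.2 a b h heq
    have := b.isLt
    omega
  · have := v.2 b a h heq.symm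
    have := a.isLt
    omega

lemma im2_lt (n i : ℕ) (hi2 : 2 ≤ i) (hin : i ≤ n) : i - 2 < n := by omega

def covIdx (i q : ℕ) : ℕ := if q < i - 2 then q else q + 1

lemma covIdx_lt (n i q : ℕ) (hn : 2 ≤ n) (hq : q < n - 2) : covIdx i q < n := by
  unfold covIdx; split_ifs <;> omega

lemma cov_val_lt (n c i : ℕ) (hn : 2 ≤ n) (hi2 : 2 ≤ i) (hin : i ≤ n)
    (v : dbVtx (n+c) n n) (hv : ((v.val ⟨i-2, im2_lt n i hi2 hin⟩) : ℕ) = n+c-1) (q : Fin (n-2)) :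
    ((v.val ⟨covIdx i q.val, covIdx_lt n i q.val hn q.isLt⟩) : ℕ) < n+c-1 := by
  have hne := vtx_inj v (a := ⟨covIdx i q.val, covIdx_lt n i q.val hn q.isLt⟩)
    (b := ⟨i-2, im2_lt n i hi2 hin⟩) (by
      intro h
      have h2 := congrArg Fin.val h
      simp only [Fin.val_mk] at h2
      unfold covIdx at h2
      have := q.isLt
      split_ifs at h2 <;> omega)
  have hlt := (v.val ⟨covIdx i q.val, covIdx_lt n i q.val hn q.isLt⟩).isLt
  have hne' : ((v.val ⟨covIdx i q.val, covIdx_lt n i q.val hn q.isLt⟩) : ℕ) ≠ n+c-1 :=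
    fun h => hne (Fin.ext (h.trans hv.symm))
  omega

def covE (n c i : ℕ) (hn : 2 ≤ n) (hi2 : 2 ≤ i) (hin : i ≤ n)
    (v : dbVtx (n+c) n n) (hv : ((v.val ⟨i-2, im2_lt n i hi2 hin⟩) : ℕ) = n+c-1)
    (q : Fin (n-2)) : Fin (n+c-1) :=
  ⟨((v.val ⟨covIdx i q.val, covIdx_lt n i q.val hn q.isLt⟩) : ℕ),
    cov_val_lt n c i hn hi2 hin v hv q⟩

lemma covE_inj (n c i : ℕ) (hn : 2 ≤ n) (hi2 : 2 ≤ i) (hin : i ≤ n)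
    (v : dbVtx (n+c) n n) (hv : ((v.val ⟨i-2, im2_lt n i hi2 hin⟩) : ℕ) = n+c-1) :
    Function.Injective (covE n c i hn hi2 hin v hv) := by
  intro q r h
  have h1 := congrArg Fin.val h
  unfold covE at h1
  simp only [Fin.val_mk] at h1
  by_contra hqr
  refine vtx_inj v (a := ⟨covIdx i q.val, covIdx_lt n i q.val hn q.isLt⟩)
    (b := ⟨covIdx i r.val, covIdx_lt n i r.val hn r.isLt⟩) ?_ (Fin.ext h1)
  intro hc
  have h2 := congrArg Fin.val hc
  simp only [Fin.val_mk] at h2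
  unfold covIdx at h2
  have hql := q.isLt
  have hrl := r.isLt
  split_ifs at h2 <;> exact hqr (Fin.ext (by omega))

lemma cov_shift (n c i : ℕ) (hn : 2 ≤ n) (hi2 : 2 ≤ i) (hin : i ≤ n)
    (v : dbVtx (n+c) n n) (hv : ((v.val ⟨i-2, im2_lt n i hi2 hin⟩) : ℕ) = n+c-1) :
    dbShift (auxVtx n c i hn hi2 hin ⟨covE n c i hn hi2 hin v hv,
      covE_inj n c i hn hi2 hin v hv⟩) v := by
  intro j h
  refine (Fin.ext ?_).symm
  show (auxVec n c i hn (covE n c i hn hi2 hin v hv) ⟨j.val+1, h⟩ : ℕ) = (v.val j : ℕ)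
  rw [auxVec_val_ne n c i hn _ (j := ⟨j.val+1, h⟩) (by simp)]
  simp only [Fin.val_mk]
  rcases lt_trichotomy (j.val+1) (i-1) with hc | hc | hc
  · have hh : j.val + 1 - 1 < n - 2 := by omega
    rw [auxTail_eval_lt n c i _ hc hh]
    show (v.val ⟨covIdx i (j.val+1-1), _⟩ : ℕ) = _
    have hidx : (⟨covIdx i (j.val+1-1), covIdx_lt n i _ hn hh⟩ : Fin n) = j := by
      apply Fin.ext
      simp only [Fin.val_mk]
      unfold covIdx
      split_ifs <;> omega
    rw [hidx]
  · rw [auxTail_eval_eq n c i _ hc.symm.symm]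
    have hj : j = (⟨i-2, im2_lt n i hi2 hin⟩ : Fin n) := Fin.ext (by simp only [Fin.val_mk]; omega)
    rw [hj, hv]
  · have hh : j.val + 1 - 2 < n - 2 := by omega
    rw [auxTail_eval_gt n c i _ hc hh]
    show (v.val ⟨covIdx i (j.val+1-2), _⟩ : ℕ) = _
    have hidx : (⟨covIdx i (j.val+1-2), covIdx_lt n i _ hn hh⟩ : Fin n) = j := by
      apply Fin.ext
      simp only [Fin.val_mk]
      unfold covIdx
      split_ifs <;> omega
    rw [hidx]


/-- in `cDB⁺(n+c,n,n)`, for `2 ≤ i ≤ n` there is a subset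
`S ⊆ A_i` of cardinality `(n+c-1)!/(c+1)!` dominating all vertices of `A_{i-1}`
(every vertex of `A_{i-1}` is an out-neighbor of some vertex of `S`).
`A_j` is the set of vertices whose `j`-th coordinate is the symbol `n+c`
(the top element of `Fin (n+c)`). -/
theorem directed_A_partition_block_domination (n c i : ℕ) (hn : 2 ≤ n)
    (hi2 : 2 ≤ i) (hin : i ≤ n) :
    ∃ S : Set (dbVtx (n + c) n n),
      S ⊆ {v : dbVtx (n + c) n n |
            ((v.val ⟨i - 1, by omega⟩ : ℕ) = n + c - 1)} ∧
      S.Finite ∧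
      S.ncard = (n + c - 1).factorial / (c + 1).factorial ∧
      ∀ v : dbVtx (n + c) n n,
        ((v.val ⟨i - 2, by omega⟩ : ℕ) = n + c - 1) →
          ∃ s ∈ S, dbShift s v := by
  classical
  refine ⟨Set.range (auxVtx n c i hn hi2 hin), ?_, Set.finite_range _, ?_, ?_⟩
  · rintro s ⟨e, rfl⟩
    simp only [Set.mem_setOf_eq]
    show (auxVec n c i hn e.1 ⟨i-1, by omega⟩ : ℕ) = n + c - 1
    rw [auxVec_val_ne n c i hn e.1 (j := ⟨i-1, by omega⟩) (by simp only [Fin.val_mk]; omega)]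
    exact auxTail_eval_eq n c i e.1 rfl
  · rw [← Nat.card_coe_set_eq, Nat.card_range_of_injective (auxVtx_inj n c i hn hi2 hin),
        Nat.card_eq_fintype_card, Fintype.card_embedding_eq, Fintype.card_fin, Fintype.card_fin,
        Nat.descFactorial_eq_div (by omega)]
    have hcc : n + c - 1 - (n - 2) = c + 1 := by omega
    rw [hcc]
  · intro v hv
    exact ⟨_, Set.mem_range_self ⟨covE n c i hn hi2 hin v hv, covE_inj n c i hn hi2 hin v hv⟩,
      cov_shift n c i hn hi2 hin v hv⟩
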